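/- Let (X_α)_{α<ω₁} be a tower of infinite subsets of ℕ with X := X_0 infinite and co-infinite. Let A = {ℕ \ X_α : α < ω₁} and let B be a family of infinite subsets of ℕ each of which is almost disjoint from X. Suppose g is a function mapping λ``A into λ``B such that there are infinitely many n ∈ X with g``(λ``A ∩ λ``[x(n)=1]) ⊆ ⋃_{m ∈ X, m ≥ n} λ``[x(m)=1]. Then the tower (X_α)_{α<ω₁} has a pseudointersection. -/
import Mathlib


/-- The Cantor–Lebesgue map `λ : 2^ω → [0,1]`, `λ x = Σ_n x(n)/2^(n+1)`. -/
noncomputable def cantorLebesgue (x : ℕ → Bool) : ℝ :=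
  ∑' n : ℕ, (if x n = true then (1 : ℝ) else 0) / 2 ^ (n + 1)

namespace Stmt4Aux

noncomputable def f (x : ℕ → Bool) (n : ℕ) : ℝ :=
  (if x n = true then (1 : ℝ) else 0) / 2 ^ (n + 1)

lemma f_nonneg (x : ℕ → Bool) (n : ℕ) : 0 ≤ f x n := by
  unfold f; positivity

lemma f_le (x : ℕ → Bool) (n : ℕ) : f x n ≤ (1/2 : ℝ) ^ (n+1) := by
  unfold f
  rw [div_pow, one_pow]
  split
  · exact le_rfl
  · rw [zero_div]; positivity

lemma summable_f (x : ℕ → Bool) : Summable (f x) := by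
  apply Summable.of_nonneg_of_le (f_nonneg x) (f_le x)
  simpa [pow_succ] using summable_geometric_two.mul_right (1/2 : ℝ)

end Stmt4Aux

namespace Stmt4Aux

lemma cantor_eq_tsum (x : ℕ → Bool) : cantorLebesgue x = ∑' n, f x n := rfl

lemma summable_geom_shift (n : ℕ) : Summable (fun k : ℕ => (1/2 : ℝ) ^ (k + n + 2)) := by
  apply Summable.of_nonneg_of_le (fun k => by positivity) (fun k => ?_)
    (summable_geometric_two)
  calc (1/2 : ℝ) ^ (k + n + 2) ≤ (1/2 : ℝ) ^ k := by
        apply pow_le_pow_of_le_one (by norm_num) (by norm_num); omega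

lemma tsum_geom_shift (n : ℕ) :
    (∑' k : ℕ, (1/2 : ℝ) ^ (k + n + 2)) = (1/2 : ℝ) ^ (n + 1) := by
  have : ∀ k : ℕ, (1/2 : ℝ) ^ (k + n + 2) = (1/2 : ℝ) ^ k * (1/2) ^ (n+2) := by
    intro k; rw [← pow_add]; ring_nf
  rw [tsum_congr this, tsum_mul_right, tsum_geometric_two, pow_succ]
  ring

lemma tail_eq (a b : ℕ → Bool) (n : ℕ) (h : cantorLebesgue a = cantorLebesgue b)
    (hlt : ∀ k < n, a k = b k) (han : a n = true) (hbn : b n = false) :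
    ∀ k > n, a k = false ∧ b k = true := by
  have hsa := Summable.sum_add_tsum_nat_add (f := f a) (n + 1) (summable_f a)
  have hsb := Summable.sum_add_tsum_nat_add (f := f b) (n + 1) (summable_f b)
  set Ta := ∑' k : ℕ, f a (k + (n + 1)) with hTa
  set Tb := ∑' k : ℕ, f b (k + (n + 1)) with hTb
  have hsum : (∑ i ∈ Finset.range (n+1), f a i) + Ta
      = (∑ i ∈ Finset.range (n+1), f b i) + Tb := by
    rw [hsa, hsb, ← cantor_eq_tsum, ← cantor_eq_tsum, h]
  have hfan : f a n = (1/2 : ℝ) ^ (n+1) := by simp [f, han, div_pow]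
  have hfbn : f b n = 0 := by simp [f, hbn]
  have hs0 : (∑ i ∈ Finset.range n, f a i) = ∑ i ∈ Finset.range n, f b i :=
    Finset.sum_congr rfl fun i hi => by
      rw [f, f, hlt i (Finset.mem_range.mp hi)]
  have key : Tb = Ta + (1/2 : ℝ) ^ (n+1) := by
    rw [Finset.sum_range_succ, Finset.sum_range_succ, hs0, hfan, hfbn] at hsum
    linarith
  have hTa0 : 0 ≤ Ta := tsum_nonneg (fun k => f_nonneg a _)
  have hsb' : Summable (fun k : ℕ => f b (k + (n+1))) :=
    (summable_nat_add_iff (n+1)).mpr (summable_f b)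
  have hsa' : Summable (fun k : ℕ => f a (k + (n+1))) :=
    (summable_nat_add_iff (n+1)).mpr (summable_f a)
  have hTble : Tb ≤ (1/2 : ℝ) ^ (n+1) := by
    rw [hTb, ← tsum_geom_shift n]
    apply Summable.tsum_le_tsum _ hsb' (summable_geom_shift n)
    intro k
    have := f_le b (k + (n+1))
    calc f b (k + (n+1)) ≤ (1/2 : ℝ) ^ (k + (n+1) + 1) := this
      _ = (1/2 : ℝ) ^ (k + n + 2) := by ring_nf
  have hTa0' : Ta = 0 := le_antisymm (by linarith) hTa0
  have hTbeq : Tb = (1/2 : ℝ) ^ (n+1) := by rw [key, hTa0', zero_add]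
  -- each f a (k + (n+1)) = 0
  have hazero : ∀ k : ℕ, f a (k + (n+1)) = 0 := by
    intro k
    have hle : f a (k + (n+1)) ≤ Ta := Summable.le_tsum hsa' k (fun j _ => f_nonneg a _)
    have := f_nonneg a (k + (n+1))
    linarith
  -- each f b (k + (n+1)) attains the max
  have hbfull : ∀ k : ℕ, f b (k + (n+1)) = (1/2 : ℝ) ^ (k + n + 2) := by
    have hdiff : Summable (fun k : ℕ => (1/2 : ℝ) ^ (k + n + 2) - f b (k + (n+1))) :=
      (summable_geom_shift n).sub hsb'
    have hzero : (∑' k : ℕ, ((1/2 : ℝ) ^ (k + n + 2) - f b (k + (n+1)))) = 0 := by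
      rw [Summable.tsum_sub (summable_geom_shift n) hsb', tsum_geom_shift, ← hTb, hTbeq, sub_self]
    intro k
    have h1 : (1/2 : ℝ) ^ (k + n + 2) - f b (k + (n+1)) ≤ 0 := by
      rw [← hzero]
      exact Summable.le_tsum hdiff k (fun j _ => by
        have := f_le b (j + (n+1))
        have h2 : (1/2 : ℝ) ^ (j + (n+1) + 1) = (1/2 : ℝ) ^ (j + n + 2) := by ring_nf
        linarith)
    have h2 : f b (k + (n+1)) ≤ (1/2 : ℝ) ^ (k + n + 2) := by
      calc f b (k + (n+1)) ≤ (1/2 : ℝ) ^ (k + (n+1) + 1) := f_le b _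
        _ = (1/2 : ℝ) ^ (k + n + 2) := by ring_nf
    linarith
  intro k hk
  have hk' : k = (k - (n+1)) + (n+1) := by omega
  constructor
  · have h0 := hazero (k - (n+1)); rw [← hk'] at h0
    by_contra hcon
    have hak : a k = true := by revert hcon; cases a k <;> simp
    rw [f, hak, if_pos rfl] at h0
    have h2 : (0:ℝ) < 1 / 2 ^ (k+1) := by positivity
    linarith
  · have h0 := hbfull (k - (n+1)); rw [← hk'] at h0
    by_contra hcon
    have hbk : b k = false := by revert hcon; cases b k <;> simp
    rw [f, hbk] at h0
    simp only [Bool.false_eq_true, if_false, zero_div] at h0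
    have h2 : (0:ℝ) < (1/2 : ℝ) ^ (k - (n+1) + n + 2) := by positivity
    linarith

end Stmt4Aux

namespace Stmt4Aux

lemma cantor_inj (a b : ℕ → Bool) (ha1 : {n | a n = true}.Infinite)
    (ha0 : {n | a n = false}.Infinite) (h : cantorLebesgue a = cantorLebesgue b) :
    a = b := by
  by_contra hne
  have hex : ∃ n, a n ≠ b n := Function.ne_iff.mp hne
  classical
  let n := Nat.find hex
  have hn : a n ≠ b n := Nat.find_spec hex
  have hlt : ∀ k < n, a k = b k := fun k hk => by
    have := Nat.find_min hex hk
    simpa using this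
  rcases Bool.eq_false_or_eq_true (a n) with hat | haf
  · -- a n = true, so b n = false; apply tail_eq to a, b
    have hbf : b n = false := by revert hn; rw [hat]; cases b n <;> simp
    have htail := tail_eq a b n h hlt hat hbf
    apply ha1
    apply Set.Finite.subset (Set.finite_Iic n)
    intro m hm
    simp only [Set.mem_setOf_eq] at hm
    by_contra hcon
    have hgt : m > n := by simpa [Set.mem_Iic] using hcon
    have hfin := (htail m hgt).1
    rw [hm] at hfin; exact Bool.false_ne_true hfin.symm
  · -- a n = false, so b n = true; apply tail_eq to b, a
    have hbt : b n = true := by revert hn; rw [haf]; cases b n <;> simp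
    have htail := tail_eq b a n h.symm (fun k hk => (hlt k hk).symm) hbt haf
    apply ha0
    apply Set.Finite.subset (Set.finite_Iic n)
    intro m hm
    simp only [Set.mem_setOf_eq] at hm
    by_contra hcon
    have hgt : m > n := by simpa [Set.mem_Iic] using hcon
    have hfin := (htail m hgt).2
    rw [hm] at hfin; exact Bool.false_ne_true hfin

end Stmt4Aux

/-- towers, complements and the Cantor–Lebesgue map.  If `g` maps
`λ``A` into `λ``B` and for infinitely many `n ∈ X` the image under `g` of
`λ``A ∩ λ``[x(n)=1]` is contained in `⋃_{m ∈ X, m ≥ n} λ``[x(m)=1]`, then the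
tower has a pseudointersection. -/
theorem stmt4
    (X : Ordinal → Set ℕ)
    (htower_inf : ∀ α < (Cardinal.aleph 1).ord, (X α).Infinite)
    (htower : ∀ α β : Ordinal, α < β → β < (Cardinal.aleph 1).ord → (X β \ X α).Finite)
    (hX0inf : (X 0).Infinite) (hX0coinf : (X 0)ᶜ.Infinite)
    (A B : Set (ℕ → Bool))
    (hA : A = {y : ℕ → Bool | ∃ α < (Cardinal.aleph 1).ord, ∀ n : ℕ, y n = true ↔ n ∉ X α})
    (hBinf : ∀ Y ∈ B, {n : ℕ | Y n = true}.Infinite)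
    (hBad : ∀ Y ∈ B, ({n : ℕ | Y n = true} ∩ X 0).Finite)
    (g : ℝ → ℝ)
    (hg : ∀ r ∈ cantorLebesgue '' A, g r ∈ cantorLebesgue '' B)
    (hinf : {n ∈ X 0 | ∀ r ∈ cantorLebesgue '' A ∩ cantorLebesgue '' {y : ℕ → Bool | y n = true},
        g r ∈ ⋃ m ∈ {m ∈ X 0 | n ≤ m},
          cantorLebesgue '' {y : ℕ → Bool | y m = true}}.Infinite) :
    ∃ S : Set ℕ, S.Infinite ∧ ∀ α < (Cardinal.aleph 1).ord, (S \ X α).Finite := by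
  classical
  set S : Set ℕ := {n ∈ X 0 | ∀ r ∈ cantorLebesgue '' A ∩ cantorLebesgue '' {y : ℕ → Bool | y n = true},
        g r ∈ ⋃ m ∈ {m ∈ X 0 | n ≤ m},
          cantorLebesgue '' {y : ℕ → Bool | y m = true}} with hS
  refine ⟨S, hinf, ?_⟩
  intro α hα
  -- the characteristic function of the complement of X α
  set y : ℕ → Bool := fun n => decide (n ∉ X α) with hy
  have hyA : y ∈ A := by
    rw [hA]
    exact ⟨α, hα, fun n => by simp [hy]⟩
  have hrA : cantorLebesgue y ∈ cantorLebesgue '' A := ⟨y, hyA, rfl⟩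
  obtain ⟨Y, hYB, hYeq⟩ := hg _ hrA
  have hYfin : ({n : ℕ | Y n = true} ∩ X 0).Finite := hBad Y hYB
  obtain ⟨N, hN⟩ := hYfin.bddAbove
  -- Y is infinite and co-infinite
  have hY1 : {n | Y n = true}.Infinite := hBinf Y hYB
  have hY0 : {n | Y n = false}.Infinite := by
    apply Set.Infinite.mono _ (hX0inf.diff hYfin)
    intro m hm
    simp only [Set.mem_diff, Set.mem_inter_iff, Set.mem_setOf_eq, not_and] at hm
    simp only [Set.mem_setOf_eq]
    rcases hm with ⟨hm0, hm1⟩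
    cases hYm : Y m
    · rfl
    · exact absurd hm0 (by simpa using hm1 hYm)
  apply Set.Finite.subset (Set.finite_Iic N)
  intro n hn
  obtain ⟨⟨hn0, hnP⟩, hnX⟩ := hn
  have hyn : y n = true := by simp [hy, hnX]
  have hr2 : cantorLebesgue y ∈ cantorLebesgue '' {z : ℕ → Bool | z n = true} :=
    ⟨y, hyn, rfl⟩
  have hgr := hnP (cantorLebesgue y) ⟨hrA, hr2⟩
  simp only [Set.mem_iUnion, Set.mem_image, Set.mem_setOf_eq, exists_prop] at hgr
  obtain ⟨m, ⟨hm0, hnm⟩, y', hy'm, hy'eq⟩ := hgr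
  -- λ Y = λ y' so Y = y'
  have hYy' : Y = y' := Stmt4Aux.cantor_inj Y y' hY1 hY0 (by rw [hYeq, ← hy'eq])
  have hYm : Y m = true := by rw [hYy']; exact hy'm
  have hmem : m ∈ {n : ℕ | Y n = true} ∩ X 0 := ⟨hYm, hm0⟩
  exact le_trans hnm (hN hmem)
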